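/- For real x ≥ 3, the function f(x) = ((x+1)/x)·(1 − 1/x²)^x is nondecreasing and satisfies f(x) ≥ 2√2 − 2. -/

import Mathlib

noncomputable def gAux (x : ℝ) : ℝ :=
  Real.log (x + 1) - Real.log x +
    x * (Real.log (x + 1) + Real.log (x - 1) - 2 * Real.log x)

lemma hasDerivAt_gAux {x : ℝ} (hx : 1 < x) :
    HasDerivAt gAux
      (1 / (x + 1) - 1 / x +
        ((Real.log (x + 1) + Real.log (x - 1) - 2 * Real.log x) +
          x * (1 / (x + 1) + 1 / (x - 1) - 2 / x))) x := by
  have hx0 : x ≠ 0 := by linarith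
  have hx1 : x + 1 ≠ 0 := by linarith
  have hxm : x - 1 ≠ 0 := by linarith
  have h1 : HasDerivAt (fun y : ℝ => Real.log (y + 1)) (1 / (x + 1)) x := by
    have := ((hasDerivAt_id x).add_const 1).log hx1
    simpa using this
  have h2 : HasDerivAt (fun y : ℝ => Real.log y) (1 / x) x := by
    simpa using (hasDerivAt_id x).log hx0
  have h3 : HasDerivAt (fun y : ℝ => Real.log (y - 1)) (1 / (x - 1)) x := by
    have := ((hasDerivAt_id x).sub_const 1).log hxm
    simpa using this
  have hin : HasDerivAt (fun y : ℝ => Real.log (y + 1) + Real.log (y - 1) - 2 * Real.log y)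
      (1 / (x + 1) + 1 / (x - 1) - 2 / x) x := by
    have := (h1.add h3).sub (h2.const_mul 2)
    refine this.congr_deriv ?_
    ring
  have := (h1.sub h2).add ((hasDerivAt_id x).mul hin)
  refine this.congr_deriv ?_
  simp only [id_eq]
  ring

lemma log_eq {x : ℝ} (hx : 1 < x) :
    Real.log (x + 1) + Real.log (x - 1) - 2 * Real.log x = Real.log (1 - 1 / x ^ 2) := by
  have hx0 : x ≠ 0 := by linarith
  have h1 : (1 : ℝ) - 1 / x ^ 2 = (x + 1) * (x - 1) / x ^ 2 := by
    field_simp; ring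
  rw [h1, Real.log_div (by nlinarith) (by positivity), Real.log_mul (by linarith) (by linarith),
    Real.log_pow]
  push_cast
  ring

lemma f_eq_exp_g {x : ℝ} (hx : 3 ≤ x) :
    ((x + 1) / x) * (1 - 1 / x ^ 2) ^ x = Real.exp (gAux x) := by
  have hx1 : (1 : ℝ) < x := by linarith
  have hx0 : (0 : ℝ) < x := by linarith
  have hw : (0 : ℝ) < 1 - 1 / x ^ 2 := by
    have : 1 / x ^ 2 < 1 := by
      rw [div_lt_one (by positivity)]; nlinarith
    linarith
  unfold gAux
  rw [log_eq hx1, Real.exp_add, Real.exp_sub, Real.exp_log (by linarith), Real.exp_log hx0,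
    Real.rpow_def_of_pos hw, mul_comm (Real.log _) x]

lemma monoG : MonotoneOn gAux (Set.Ici 3) := by
  have hderiv : ∀ x ∈ interior (Set.Ici (3:ℝ)), 0 ≤ deriv gAux x := by
    intro x hx
    rw [interior_Ici] at hx
    have hx3 : (3:ℝ) < x := hx
    have hx1 : (1:ℝ) < x := by linarith
    have hx0 : (0:ℝ) < x := by linarith
    rw [(hasDerivAt_gAux hx1).deriv]
    have hw : (0 : ℝ) < 1 - 1 / x ^ 2 := by
      have : 1 / x ^ 2 < 1 := by
        rw [div_lt_one (by positivity)]; nlinarith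
      linarith
    -- rational part equals 1/(x(x-1))
    have hne0 : x ≠ 0 := by linarith
    have hnep : x + 1 ≠ 0 := by linarith
    have hnem : x - 1 ≠ 0 := by linarith
    have hnes : x ^ 2 - 1 ≠ 0 := by nlinarith
    have hrat : 1 / (x + 1) - 1 / x + x * (1 / (x + 1) + 1 / (x - 1) - 2 / x)
        = 1 / (x * (x - 1)) := by
      field_simp
      ring
    -- log bound: log(1 - 1/x^2) ≥ -1/(x^2-1)
    have hlog : -(1 / (x ^ 2 - 1)) ≤ Real.log (1 - 1 / x ^ 2) := by
      have h := Real.log_le_sub_one_of_pos (show (0:ℝ) < (1 - 1 / x ^ 2)⁻¹ by positivity)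
      rw [Real.log_inv] at h
      have he : (1 - 1 / x ^ 2)⁻¹ - 1 = 1 / (x ^ 2 - 1) := by
        rw [inv_eq_one_div]
        field_simp
        ring
      linarith [he ▸ h]
    have hcmp : 1 / (x ^ 2 - 1) ≤ 1 / (x * (x - 1)) := by
      apply one_div_le_one_div_of_le
      · nlinarith
      · nlinarith
    rw [log_eq hx1]
    linarith [hrat ▸ le_refl (1 / (x + 1) - 1 / x + x * (1 / (x + 1) + 1 / (x - 1) - 2 / x))]
  apply monotoneOn_of_deriv_nonneg (convex_Ici 3) _ _ hderiv
  · intro x hx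
    exact ((hasDerivAt_gAux (by simp at hx; linarith)).continuousAt).continuousWithinAt
  · intro x hx
    rw [interior_Ici] at hx
    exact ((hasDerivAt_gAux (by linarith [hx.out])).differentiableAt).differentiableWithinAt

theorem stmt_11 :
    MonotoneOn (fun x : ℝ => ((x + 1) / x) * (1 - 1 / x ^ 2) ^ x) (Set.Ici 3) ∧
    ∀ x : ℝ, 3 ≤ x →
      ((x + 1) / x) * (1 - 1 / x ^ 2) ^ x ≥ 2 * Real.sqrt 2 - 2 := by
  have hmono : MonotoneOn (fun x : ℝ => ((x + 1) / x) * (1 - 1 / x ^ 2) ^ x) (Set.Ici 3) := by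
    intro a ha b hb hab
    simp only
    rw [f_eq_exp_g ha, f_eq_exp_g hb, Real.exp_le_exp]
    exact monoG ha hb hab
  refine ⟨hmono, fun x hx => ?_⟩
  have h3 : ((3:ℝ) + 1) / 3 * (1 - 1 / (3:ℝ) ^ 2) ^ (3:ℝ) ≤
      ((x + 1) / x) * (1 - 1 / x ^ 2) ^ x :=
    hmono (by simp) hx hx
  have hval : ((3:ℝ) + 1) / 3 * (1 - 1 / (3:ℝ) ^ 2) ^ (3:ℝ) = 2048 / 2187 := by
    have : ((1:ℝ) - 1 / (3:ℝ) ^ 2) = 8 / 9 := by norm_num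
    rw [this, show (3:ℝ) = ((3:ℕ):ℝ) by norm_num, Real.rpow_natCast]
    norm_num
  have hsqrt : 2 * Real.sqrt 2 - 2 ≤ 2048 / 2187 := by
    nlinarith [Real.sq_sqrt (show (0:ℝ) ≤ 2 by norm_num), Real.sqrt_nonneg 2]
  rw [ge_iff_le]
  calc 2 * Real.sqrt 2 - 2 ≤ 2048 / 2187 := hsqrt
    _ = ((3:ℝ) + 1) / 3 * (1 - 1 / (3:ℝ) ^ 2) ^ (3:ℝ) := hval.symm
    _ ≤ _ := h3
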